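/- The polynomial algebra A = ℂ[X₁, X₂, X₃, …] in countably infinitely many variables over ℂ is a coherent ring: every finitely generated ideal of A is finitely presented as an A-module. -/

import Mathlib

open MvPolynomial TensorProduct

set_option maxHeartbeats 1000000
set_option synthInstance.maxHeartbeats 400000

theorem mvPolynomial_coherent_aux (s : Set ℕ) (hs : s.Finite)
    (T : Set (MvPolynomial ℕ ℂ)) (hTs : ∀ f ∈ T, ↑f.vars ⊆ s) :
    Module.FinitePresentation (MvPolynomial ℕ ℂ) (Ideal.span T) := by
  classical
  haveI : Fintype ↥s := hs.fintype
  letI : Algebra (MvPolynomial ↥s ℂ) (MvPolynomial ℕ ℂ) :=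
    (rename (Subtype.val : ↥s → ℕ)).toRingHom.toAlgebra
  have halg : (algebraMap (MvPolynomial ↥s ℂ) (MvPolynomial ℕ ℂ) : _ → _)
      = rename (Subtype.val : ↥s → ℕ) := rfl
  let u : ℕ ≃ {x : ℕ // ¬ x ∈ s} ⊕ ↥s :=
    (Equiv.sumCompl (· ∈ s)).symm.trans (Equiv.sumComm _ _)
  let e : MvPolynomial ℕ ℂ ≃ₐ[ℂ] MvPolynomial {x : ℕ // ¬ x ∈ s} (MvPolynomial ↥s ℂ) :=
    (renameEquiv ℂ u).trans (sumAlgEquiv ℂ _ _)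
  have hu : ∀ x : ↥s, u x.1 = Sum.inr x := by
    intro x
    show Equiv.sumComm _ _ ((Equiv.sumCompl (· ∈ s)).symm x.1) = Sum.inr x
    rw [Equiv.sumCompl_symm_apply_of_pos (p := (· ∈ s)) x.2]
    rfl
  have he : ∀ r : MvPolynomial ↥s ℂ,
      e (algebraMap (MvPolynomial ↥s ℂ) (MvPolynomial ℕ ℂ) r)
        = algebraMap (MvPolynomial ↥s ℂ) _ r := by
    intro r
    have h1 : e (algebraMap (MvPolynomial ↥s ℂ) (MvPolynomial ℕ ℂ) r)
        = (sumAlgEquiv ℂ _ _) (rename u (rename Subtype.val r)) := rfl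
    rw [h1, rename_rename]
    have h2 : (u ∘ (Subtype.val : ↥s → ℕ)) = Sum.inr := funext fun x => hu x
    rw [h2]
    have h3 := congrArg (fun (g : MvPolynomial ↥s ℂ →ₐ[ℂ] _) => g r)
      (sumAlgEquiv_comp_rename_inr ℂ {x : ℕ // ¬ x ∈ s} ↥s)
    simpa using h3
  let e' : MvPolynomial ℕ ℂ ≃ₗ[MvPolynomial ↥s ℂ]
      MvPolynomial {x : ℕ // ¬ x ∈ s} (MvPolynomial ↥s ℂ) :=
    { e.toEquiv with
      map_add' := map_add e
      map_smul' := fun r a => by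
        show e (r • a) = r • e a
        rw [Algebra.smul_def, map_mul, he, Algebra.smul_def] }
  haveI : Module.Free (MvPolynomial ↥s ℂ) (MvPolynomial ℕ ℂ) := Module.Free.of_equiv e'.symm
  haveI : Module.Flat (MvPolynomial ↥s ℂ) (MvPolynomial ℕ ℂ) := Module.Flat.of_free
  haveI : IsNoetherianRing (MvPolynomial ↥s ℂ) := inferInstance
  set I₀ : Ideal (MvPolynomial ↥s ℂ) :=
    Ideal.span ((rename (Subtype.val : ↥s → ℕ)) ⁻¹' T) with hI₀
  haveI : Module.Finite (MvPolynomial ↥s ℂ) I₀ :=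
    Module.Finite.iff_fg.mpr (IsNoetherian.noetherian _)
  haveI : Module.FinitePresentation (MvPolynomial ↥s ℂ) I₀ :=
    (Module.finitePresentation_iff_finite _ _).mpr inferInstance
  -- the multiplication map
  let φ : ((MvPolynomial ℕ ℂ) ⊗[MvPolynomial ↥s ℂ] I₀) →ₗ[MvPolynomial ℕ ℂ] MvPolynomial ℕ ℂ :=
    (TensorProduct.AlgebraTensorModule.rid (MvPolynomial ↥s ℂ)
        (MvPolynomial ℕ ℂ) (MvPolynomial ℕ ℂ)).toLinearMap ∘ₗ
      (I₀.subtype.baseChange (MvPolynomial ℕ ℂ))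
  have hφ : ∀ (a : MvPolynomial ℕ ℂ) (x : I₀),
      φ (a ⊗ₜ x) = algebraMap (MvPolynomial ↥s ℂ) (MvPolynomial ℕ ℂ) x.1 * a := by
    intro a x
    show (TensorProduct.AlgebraTensorModule.rid (MvPolynomial ↥s ℂ) (MvPolynomial ℕ ℂ)
        (MvPolynomial ℕ ℂ)) (a ⊗ₜ (x.1 : MvPolynomial ↥s ℂ)) = _
    rw [show (TensorProduct.AlgebraTensorModule.rid (MvPolynomial ↥s ℂ) (MvPolynomial ℕ ℂ)
        (MvPolynomial ℕ ℂ))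
        (a ⊗ₜ (x.1 : MvPolynomial ↥s ℂ)) = x.1 • a from rfl, Algebra.smul_def]
  have hinj : Function.Injective φ := by
    apply Function.Injective.comp
      (TensorProduct.AlgebraTensorModule.rid (MvPolynomial ↥s ℂ) (MvPolynomial ℕ ℂ)
        (MvPolynomial ℕ ℂ)).injective
    rw [LinearMap.baseChange_eq_ltensor]
    exact Module.Flat.lTensor_preserves_injective_linearMap I₀.subtype I₀.injective_subtype
  have hkey : ∀ g ∈ I₀, rename (Subtype.val : ↥s → ℕ) g ∈ Ideal.span T := by
    intro g hg
    have : I₀ ≤ Ideal.comap ((rename (Subtype.val : ↥s → ℕ)).toRingHom) (Ideal.span T) := by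
      rw [hI₀, Ideal.span_le]
      intro q hq
      exact Ideal.subset_span hq
    exact this hg
  have hrange : LinearMap.range φ = Ideal.span T := by
    apply le_antisymm
    · rintro _ ⟨y, rfl⟩
      induction y using TensorProduct.induction_on with
      | zero => rw [map_zero]; exact (Ideal.span T).zero_mem
      | tmul a x =>
          rw [hφ]
          exact (Ideal.span T).mul_mem_right a (hkey x.1 x.2)
      | add y z hy hz => rw [map_add]; exact (Ideal.span T).add_mem hy hz
    · rw [Ideal.span_le]
      intro f hf
      have hmem : f ∈ supported ℂ s := (mem_supported).mpr (hTs f hf)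
      rw [supported_eq_range_rename] at hmem
      obtain ⟨g, hg⟩ := hmem
      have hgI₀ : g ∈ I₀ := Ideal.subset_span
        (by show rename _ g ∈ T; rw [show rename (Subtype.val : ↥s → ℕ) g = f from hg]; exact hf)
      refine ⟨1 ⊗ₜ ⟨g, hgI₀⟩, ?_⟩
      rw [hφ]
      rw [halg]
      simpa using hg
  let ψ : ((MvPolynomial ℕ ℂ) ⊗[MvPolynomial ↥s ℂ] I₀) ≃ₗ[MvPolynomial ℕ ℂ] (Ideal.span T) :=
    (LinearEquiv.ofInjective φ hinj).trans (LinearEquiv.ofEq _ _ hrange)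
  haveI : Module.FinitePresentation (MvPolynomial ℕ ℂ)
      ((MvPolynomial ℕ ℂ) ⊗[MvPolynomial ↥s ℂ] I₀) := inferInstance
  exact Module.finitePresentation_of_surjective ψ.toLinearMap ψ.surjective
    (by rw [LinearEquiv.ker]; exact Submodule.fg_bot)

/-- The polynomial algebra `A = ℂ[X₁, X₂, …] =
MvPolynomial ℕ ℂ` is a coherent ring: every finitely generated ideal of `A`
is finitely presented as an `A`-module. -/
theorem mvPolynomial_nat_complex_coherent
    (I : Ideal (MvPolynomial ℕ ℂ)) (hI : I.FG) :
    Module.FinitePresentation (MvPolynomial ℕ ℂ) I := by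
  classical
  obtain ⟨T, hT⟩ := hI
  have := mvPolynomial_coherent_aux ↑(T.sup fun f => f.vars) (Finset.finite_toSet _) ↑T
    (fun f hf => Finset.coe_subset.mpr (Finset.le_sup hf))
  rwa [hT] at this
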